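/- Let N : ℕ and for each t : Fin N let (P t, w t) be a decision list of length n t over α that is total at every x : α. Define the combined decision list indexed by the product type Π t, Fin (n t), ordered lexicographically with priority to smaller t, whose rule c has body (∀ t, P t (c t) x) and value ∑ t, w t (c t). Then the combined list is total at every x, and for every x its value at x equals ∑ t, (value of the t-th list at x). -/
import Mathlib


/-- The lexicographic order (with priority to smaller `t`) on the product
`Π t, Fin (n t)`: `c < c'` iff at the least index `t` where they differ, `c t < c' t`. -/
def piLexLT {N : ℕ} {n : Fin N → ℕ} (c c' : ∀ t, Fin (n t)) : Prop :=
  ∃ t : Fin N, (∀ s < t, c s = c' s) ∧ c t < c' t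

/-- Correctness of the incremental combination of an ensemble of `N` boosted trees
(decision lists) into a single decision list.  For each `t : Fin N` let `(P t, w t)` be
a decision list of length `n t` over `α`, total at every `x`.  The combined decision
list is indexed by `Π t, Fin (n t)`, ordered lexicographically with priority to smaller
`t`; its rule `c` has body `∀ t, P t (c t) x` and value `∑ t, w t (c t)`.  Then the
combined list is total at every `x`, and its value at `x` — the value of its first
(lexicographically least) satisfied rule `c` — equals `∑ t, w t (a t)` where, for each
`t`, `a t` is the active rule of the `t`-th list at `x`, i.e. the sum over `t` of the
value of the `t`-th list at `x`. -/
theorem ensemble_combined_decision_list_value_eq_sum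
    {α : Type*} {N : ℕ} {n : Fin N → ℕ}
    (P : ∀ t : Fin N, Fin (n t) → α → Prop) (w : ∀ t : Fin N, Fin (n t) → ℝ)
    (hP : ∀ (t : Fin N) (x : α), ∃ i, P t i x) :
    ∀ x : α,
      (∃ c : ∀ t, Fin (n t), ∀ t, P t (c t) x) ∧
      ∀ (c a : ∀ t, Fin (n t)),
        ((∀ t, P t (c t) x) ∧ ∀ c' : ∀ t, Fin (n t), piLexLT c' c → ¬ ∀ t, P t (c' t) x) →
        (∀ t, P t (a t) x ∧ ∀ k < a t, ¬ P t k x) →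
        (∑ t, w t (c t)) = ∑ t, w t (a t) := by
  intro x
  constructor
  · exact ⟨fun t => (hP t x).choose, fun t => (hP t x).choose_spec⟩
  · rintro c a ⟨hc, hmin⟩ ha
    have hca : ∀ t, c t = a t := by
      by_contra h
      push_neg at h
      obtain ⟨t0, ht0⟩ := h
      set S : Finset (Fin N) := Finset.univ.filter (fun t => c t ≠ a t) with hS
      have hne : S.Nonempty := ⟨t0, by simp [hS, ht0]⟩
      set t := S.min' hne with htdef
      have htS : c t ≠ a t := by
        have := S.min'_mem hne
        simpa [hS] using this
      have hbelow : ∀ s < t, c s = a s := by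
        intro s hs
        by_contra hcs
        exact absurd (S.min'_le s (by simp [hS, hcs])) (not_le.mpr hs)
      have hat : a t < c t := by
        rcases lt_trichotomy (a t) (c t) with h' | h' | h'
        · exact h'
        · exact absurd h'.symm htS
        · exact absurd (hc t) ((ha t).2 _ h')
      set c' : ∀ s, Fin (n s) := fun s => if h : s < t then c s else a s with hc'
      refine hmin c' ⟨t, ?_, ?_⟩ ?_
      · intro s hs; simp [hc', hs]
      · simpa [hc'] using hat
      · intro s
        by_cases h : s < t
        · simpa [hc', h] using hc s
        · simpa [hc', h] using (ha s).1
    exact Finset.sum_congr rfl fun t _ => by rw [hca t]
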